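/- arXiv:1506.07623 — 2 statements merged into one kernel-verified Lean document; each statement's English description precedes it below -/
import Mathlib

section
/- Let τ be a θ-compatible stopping time such that for every x ∈ 𝐗, τ is ℙ_x-almost surely finite. Then for every nonnegative borelian function f on 𝐗 and every x ∈ 𝐗 the following identities hold (as equalities in [0,∞]): (R+Q)f(x) = f(x) + RPf(x); f(x) + PRf(x) = Rf(x) + SRf(x); Sf(x) + PQf(x) = SQf(x) + Qf(x); and RSf(x) = Qf(x). -/
open MeasureTheory Filter Set Topology
open scoped ENNReal NNReal ENat

noncomputable section

/-- The shift on path space. -/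
def pshift {X : Type*} (ω : ℕ → X) : ℕ → X := fun n => ω (n + 1)

/-- The natural filtration on path space: the σ-algebra generated by the first `n+1`
coordinates. -/
def pathFiltration (X : Type*) [MeasurableSpace X] (n : ℕ) : MeasurableSpace (ℕ → X) :=
  MeasurableSpace.comap (fun ω (i : Fin (n + 1)) => ω (i : ℕ)) inferInstance

/-- A Markov chain on `X`, given by the family of its path-space laws `ℙ_x`. -/
structure MarkovChain (X : Type*) [MeasurableSpace X] where
  law : X → Measure (ℕ → X)
  prob : ∀ x, IsProbabilityMeasure (law x)
  meas_law : Measurable law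
  start : ∀ x, (law x).map (fun ω => ω 0) = Measure.dirac x
  markov : ∀ (x : X) (n : ℕ) (A : Set (ℕ → X)),
      MeasurableSet[pathFiltration X n] A → ∀ g : (ℕ → X) → ℝ≥0∞, Measurable g →
      ∫⁻ ω in A, g (fun k => ω (k + n)) ∂law x = ∫⁻ ω in A, ∫⁻ η, g η ∂law (ω n) ∂law x

variable {X : Type*} [MeasurableSpace X]

/-- A stopping time on path space, with values in `ℕ∞`. -/
def IsPathStoppingTime (τ : (ℕ → X) → ℕ∞) : Prop :=
  ∀ n : ℕ, MeasurableSet[pathFiltration X n] {ω | τ ω = (n : ℕ∞)}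

/-- `τ` is θ-compatible: `ℙ_x(τ = 0) = 0` and, almost everywhere, `τ ≥ 2` implies
`τ ∘ θ = τ - 1`. -/
def ThetaCompatible (M : MarkovChain X) (τ : (ℕ → X) → ℕ∞) : Prop :=
  (∀ x, M.law x {ω | τ ω = 0} = 0) ∧
    ∀ x, ∀ᵐ ω ∂M.law x, 2 ≤ τ ω → τ (pshift ω) = τ ω - 1

/-- The Markov operator `P` on nonnegative functions: `Pf(x) = 𝔼_x f(X_1)`. -/
def Pop (M : MarkovChain X) (f : X → ℝ≥0∞) (x : X) : ℝ≥0∞ := ∫⁻ ω, f (ω 1) ∂M.law x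

/-- The induced operator `Q`: `Qg(x) = ∫_{τ<∞} g(X_τ) dℙ_x`. -/
def Qop (M : MarkovChain X) (τ : (ℕ → X) → ℕ∞) (g : X → ℝ≥0∞) (x : X) : ℝ≥0∞ :=
  ∫⁻ ω in {ω | τ ω ≠ ⊤}, g (ω (τ ω).toNat) ∂M.law x

/-- The operator `S`: `Sf(x) = ∫_{τ=1} f(X_1) dℙ_x`. -/
def Sop (M : MarkovChain X) (τ : (ℕ → X) → ℕ∞) (f : X → ℝ≥0∞) (x : X) : ℝ≥0∞ :=
  ∫⁻ ω in {ω | τ ω = 1}, f (ω 1) ∂M.law x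

/-- The operator `R`: `Rf(x) = ∫_{τ<∞} (f(X_0) + ⋯ + f(X_{τ-1})) dℙ_x`. -/
def Rop (M : MarkovChain X) (τ : (ℕ → X) → ℕ∞) (f : X → ℝ≥0∞) (x : X) : ℝ≥0∞ :=
  ∫⁻ ω in {ω | τ ω ≠ ⊤}, ∑ k ∈ Finset.range (τ ω).toNat, f (ω k) ∂M.law x

/-- `𝔼_x τ`, with values in `[0,∞]`. -/
def EtauE (M : MarkovChain X) (τ : (ℕ → X) → ℕ∞) (x : X) : ℝ≥0∞ :=
  ∫⁻ ω, (τ ω : ℝ≥0∞) ∂M.law x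

/-- `μ` is `P`-invariant: `∫ Pf dμ = ∫ f dμ` for every bounded nonnegative borelian `f`. -/
def PInvariant (M : MarkovChain X) (μ : Measure X) : Prop :=
  ∀ f : X → ℝ≥0∞, Measurable f → (∃ C : ℝ≥0∞, C ≠ ⊤ ∧ ∀ x, f x ≤ C) →
    ∫⁻ x, Pop M f x ∂μ = ∫⁻ x, f x ∂μ

/-- `ν` is `Q`-invariant: `∫ Qf dν = ∫ f dν` for every bounded nonnegative borelian `f`. -/
def QInvariant (M : MarkovChain X) (τ : (ℕ → X) → ℕ∞) (ν : Measure X) : Prop :=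
  ∀ f : X → ℝ≥0∞, Measurable f → (∃ C : ℝ≥0∞, C ≠ ⊤ ∧ ∀ x, f x ≤ C) →
    ∫⁻ x, Qop M τ f x ∂ν = ∫⁻ x, f x ∂ν

/-- `ν = S*μ`, i.e. `ν(A) = ∫ S𝟙_A dμ` for every borelian `A`. -/
def SstarEq (M : MarkovChain X) (τ : (ℕ → X) → ℕ∞) (μ ν : Measure X) : Prop :=
  ∀ A : Set X, MeasurableSet A → ν A = ∫⁻ x, Sop M τ (A.indicator 1) x ∂μ

/-- `m = R*ν`, i.e. `m(A) = ∫ R𝟙_A dν` for every borelian `A`. -/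
def RstarEq (M : MarkovChain X) (τ : (ℕ → X) → ℕ∞) (ν m : Measure X) : Prop :=
  ∀ A : Set X, MeasurableSet A → m A = ∫⁻ x, Rop M τ (A.indicator 1) x ∂ν

/-- the real-valued Markov operator -/
def Pr (M : MarkovChain X) (f : X → ℝ) (x : X) : ℝ := ∫ ω, f (ω 1) ∂M.law x

/-- the real-valued induced operator -/
def Qr (M : MarkovChain X) (τ : (ℕ → X) → ℕ∞) (g : X → ℝ) (x : X) : ℝ :=
  ∫ ω in {ω | τ ω ≠ ⊤}, g (ω (τ ω).toNat) ∂M.law x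

/-- the real-valued operator `S` -/
def Sr (M : MarkovChain X) (τ : (ℕ → X) → ℕ∞) (f : X → ℝ) (x : X) : ℝ :=
  ∫ ω in {ω | τ ω = 1}, f (ω 1) ∂M.law x

/-- the real-valued operator `R` -/
def Rr (M : MarkovChain X) (τ : (ℕ → X) → ℕ∞) (f : X → ℝ) (x : X) : ℝ :=
  ∫ ω in {ω | τ ω ≠ ⊤}, ∑ k ∈ Finset.range (τ ω).toNat, f (ω k) ∂M.law x

/-- `𝔼_x τ` as a real number. -/
def Etau (M : MarkovChain X) (τ : (ℕ → X) → ℕ∞) (x : X) : ℝ := (EtauE M τ x).toReal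

/-- `B_u = sup (Pu - u) + 1`. -/
def Bu (M : MarkovChain X) (u : X → ℝ) : ℝ :=
  sSup (Set.range fun x => Pr M u x - u x) + 1

/-- the weight `u - Pu + B_u` defining the space `𝓔_u`. -/
def wE (M : MarkovChain X) (u : X → ℝ) : X → ℝ := fun x => u x - Pr M u x + Bu M u

/-- `u` is a drift function: `u ≥ 1`, `u - Pu` is bounded below and, with
`B_u = sup (Pu - u) + 1`, the functions `Qu`, `𝔼τ/u` and `P(u-Pu+B_u)/(u-Pu+B_u)` are
bounded. -/
structure IsDrift (M : MarkovChain X) (τ : (ℕ → X) → ℕ∞) (u : X → ℝ) : Prop where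
  meas : Measurable u
  one_le : ∀ x, 1 ≤ u x
  int_one : ∀ x, Integrable (fun ω => u (ω 1)) (M.law x)
  bdd : BddAbove (Set.range fun x => Pr M u x - u x)
  etau_ne_top : ∀ x, EtauE M τ x ≠ ⊤
  qu_bdd : ∃ C : ℝ, ∀ x, Qr M τ u x ≤ C
  etau_div_bdd : ∃ C : ℝ, ∀ x, Etau M τ x ≤ C * u x
  pw_bdd : ∃ C : ℝ, ∀ x, Pr M (wE M u) x ≤ C * wE M u x

/-- membership in the weighted space `𝓕^p_v` : `f` is borelian and `|f| ≤ C v^{1/p}`. -/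
def MemWp (v : X → ℝ) (p : ℝ) (f : X → ℝ) : Prop :=
  Measurable f ∧ ∃ C : ℝ, ∀ x, |f x| ≤ C * v x ^ (1 / p)

/-- the norm of the weighted space `𝓕^p_v` : `‖f‖ = sup_x |f(x)|/v(x)^{1/p}`. -/
def normWp (v : X → ℝ) (p : ℝ) (f : X → ℝ) : ℝ := ⨆ x, |f x| / v x ^ (1 / p)

/-- ergodicity among a class of invariant measures: a finite nonzero invariant measure is
ergodic if it is not a nontrivial convex combination of two distinct invariant probability
measures. -/
def ErgodicAmong (Inv : Measure X → Prop) (μ : Measure X) : Prop :=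
  μ ≠ 0 ∧ ∀ (ν₁ ν₂ : Measure X) (t : ℝ≥0∞), Inv ν₁ → Inv ν₂ →
    IsProbabilityMeasure ν₁ → IsProbabilityMeasure ν₂ → 0 < t → t < 1 →
    μ = μ Set.univ • (t • ν₁ + (1 - t) • ν₂) → ν₁ = ν₂


namespace Stmt0Aux

set_option linter.unusedSectionVars false

variable {X : Type*} [MeasurableSpace X]

/-- shift by `k` on path space -/
def shf (k : ℕ) (ω : ℕ → X) : ℕ → X := fun j => ω (j + k)

lemma measurable_shf (k : ℕ) : Measurable (shf (X := X) k) :=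
  measurable_pi_lambda _ fun _ => measurable_pi_apply _

lemma measurable_pshift : Measurable (pshift (X := X)) :=
  measurable_pi_lambda _ fun _ => measurable_pi_apply _

lemma shf_zero (ω : ℕ → X) : shf 0 ω = ω := rfl

lemma shf_one (ω : ℕ → X) : shf 1 ω = pshift ω := rfl

lemma pshift_shf (k : ℕ) (ω : ℕ → X) : pshift (shf k ω) = shf (k + 1) ω := by
  funext j
  show ω (j + 1 + k) = ω (j + (k + 1))
  congr 1
  omega

lemma pathFiltration_le (n : ℕ) :
    pathFiltration X n ≤ (inferInstance : MeasurableSpace (ℕ → X)) := by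
  rintro s ⟨t, ht, rfl⟩
  exact (measurable_pi_lambda _ fun _ => measurable_pi_apply _) ht

lemma pathFiltration_mono {n m : ℕ} (h : n ≤ m) :
    pathFiltration X n ≤ pathFiltration X m := by
  rintro s ⟨t, ht, rfl⟩
  exact ⟨(fun v (i : Fin (n + 1)) => v (Fin.castLE (by omega) i)) ⁻¹' t,
    (measurable_pi_lambda _ fun _ => measurable_pi_apply _) ht, rfl⟩

section tau

variable {τ : (ℕ → X) → ℕ∞}

lemma meas_tau (hst : IsPathStoppingTime τ) : Measurable τ :=
  ENat.measurable_iff.mpr fun n => pathFiltration_le n _ (hst n)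

lemma measSet_pre (hst : IsPathStoppingTime τ) (p : ℕ∞ → Prop) :
    MeasurableSet {ω | p (τ ω)} :=
  meas_tau hst (MeasurableSet.of_discrete (s := {t | p t}))

lemma filt_lt (hst : IsPathStoppingTime τ) (k : ℕ) :
    MeasurableSet[pathFiltration X k] {ω | (k : ℕ∞) < τ ω} := by
  have h : {ω : ℕ → X | (k : ℕ∞) < τ ω} =
      (⋃ j : Fin (k + 1), {ω : ℕ → X | τ ω = ((j : ℕ) : ℕ∞)})ᶜ := by
    ext ω
    simp only [Set.mem_compl_iff, Set.mem_iUnion, Set.mem_setOf_eq, not_exists]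
    constructor
    · intro hlt j hje
      rw [hje] at hlt
      have : k < (j : ℕ) := by exact_mod_cast hlt
      omega
    · intro hne
      cases hτ : τ ω with
      | top => exact ENat.coe_lt_top k
      | coe m =>
        rcases lt_or_ge k m with h' | h'
        · exact_mod_cast h'
        · exact absurd hτ (hne (⟨m, Nat.lt_succ_of_le h'⟩ : Fin (k + 1)))
  rw [h]
  exact (MeasurableSet.iUnion fun j : Fin (k + 1) => pathFiltration_mono (Nat.lt_succ_iff.mp j.isLt) _ (hst j)).compl

lemma two_le_iff_one_lt (t : ℕ∞) : 2 ≤ t ↔ ((1 : ℕ) : ℕ∞) < t := by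
  cases t with
  | top => exact ⟨fun _ => ENat.coe_lt_top 1, fun _ => le_top⟩
  | coe m =>
    constructor
    · intro h
      exact_mod_cast (by exact_mod_cast h : (2 : ℕ) ≤ m)
    · intro h
      exact_mod_cast (by exact_mod_cast h : (1 : ℕ) < m)

lemma filt_ge2 (hst : IsPathStoppingTime τ) :
    MeasurableSet[pathFiltration X 1] {ω | 2 ≤ τ ω} := by
  have : {ω : ℕ → X | 2 ≤ τ ω} = {ω | ((1 : ℕ) : ℕ∞) < τ ω} := by
    ext ω; exact two_le_iff_one_lt _
  rw [this]
  exact filt_lt hst 1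

end tau

section ops

variable (τ : (ℕ → X) → ℕ∞) (f : X → ℝ≥0∞)

/-- integrand of `Q` -/
def gQ : (ℕ → X) → ℝ≥0∞ := {ω | τ ω ≠ ⊤}.indicator fun ω => f (ω (τ ω).toNat)

/-- integrand of `R` -/
def gR : (ℕ → X) → ℝ≥0∞ :=
  {ω | τ ω ≠ ⊤}.indicator fun ω => ∑ k ∈ Finset.range (τ ω).toNat, f (ω k)

/-- integrand of `S` -/
def gS : (ℕ → X) → ℝ≥0∞ := {ω | τ ω = 1}.indicator fun ω => f (ω 1)

variable {τ f}

lemma gQ_eq_tsum : gQ τ f = fun ω =>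
    ∑' n : ℕ, ({ω : ℕ → X | τ ω = (n : ℕ∞)}.indicator (fun ω => f (ω n))) ω := by
  funext ω
  cases hτ : τ ω with
  | top =>
    rw [gQ, Set.indicator_of_notMem (by simp [hτ])]
    symm
    rw [tsum_congr fun n => Set.indicator_of_notMem (by simp [hτ]) _]
    exact tsum_zero
  | coe m =>
    rw [gQ, Set.indicator_of_mem (by simp [hτ]), hτ, ENat.toNat_coe]
    symm
    rw [tsum_eq_single m fun n hn =>
      Set.indicator_of_notMem (by simp [hτ, (Nat.cast_injective.ne_iff).mpr (Ne.symm hn)]) _]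
    exact Set.indicator_of_mem (by simp [hτ]) _

lemma gR_eq_tsum : gR τ f = fun ω =>
    ∑' n : ℕ, ({ω : ℕ → X | τ ω = (n : ℕ∞)}.indicator
      (fun ω => ∑ k ∈ Finset.range n, f (ω k))) ω := by
  funext ω
  cases hτ : τ ω with
  | top =>
    rw [gR, Set.indicator_of_notMem (by simp [hτ])]
    symm
    rw [tsum_congr fun n => Set.indicator_of_notMem (by simp [hτ]) _]
    exact tsum_zero
  | coe m =>
    rw [gR, Set.indicator_of_mem (by simp [hτ]), hτ, ENat.toNat_coe]
    symm
    rw [tsum_eq_single m fun n hn =>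
      Set.indicator_of_notMem (by simp [hτ, (Nat.cast_injective.ne_iff).mpr (Ne.symm hn)]) _]
    exact Set.indicator_of_mem (by simp [hτ]) _

lemma meas_gQ (hst : IsPathStoppingTime τ) (hf : Measurable f) : Measurable (gQ τ f) := by
  rw [gQ_eq_tsum]
  exact Measurable.ennreal_tsum fun n =>
    ((hf.comp (measurable_pi_apply n)).indicator (measSet_pre hst fun t => t = (n : ℕ∞)))

lemma meas_gR (hst : IsPathStoppingTime τ) (hf : Measurable f) : Measurable (gR τ f) := by
  rw [gR_eq_tsum]
  exact Measurable.ennreal_tsum fun n =>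
    ((Finset.measurable_sum _ fun k _ => hf.comp (measurable_pi_apply k)).indicator
      (measSet_pre hst fun t => t = (n : ℕ∞)))

lemma meas_gS (hst : IsPathStoppingTime τ) (hf : Measurable f) : Measurable (gS τ f) :=
  (hf.comp (measurable_pi_apply 1)).indicator (measSet_pre hst fun t => t = 1)

variable {M : MarkovChain X}

lemma Qop_eq (hst : IsPathStoppingTime τ) (y : X) :
    Qop M τ f y = ∫⁻ ω, gQ τ f ω ∂M.law y :=
  (lintegral_indicator (measSet_pre hst fun t => t ≠ ⊤) _).symm

lemma Rop_eq (hst : IsPathStoppingTime τ) (y : X) :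
    Rop M τ f y = ∫⁻ ω, gR τ f ω ∂M.law y :=
  (lintegral_indicator (measSet_pre hst fun t => t ≠ ⊤) _).symm

lemma Sop_eq (hst : IsPathStoppingTime τ) (y : X) :
    Sop M τ f y = ∫⁻ ω, gS τ f ω ∂M.law y :=
  (lintegral_indicator (measSet_pre hst fun t => t = 1) _).symm

lemma law_eval0 (x : X) {g : X → ℝ≥0∞} (hg : Measurable g) :
    ∫⁻ ω, g (ω 0) ∂M.law x = g x := by
  rw [← lintegral_map hg (measurable_pi_apply 0), M.start x, lintegral_dirac' x hg]

lemma meas_Pop (hf : Measurable f) : Measurable (Pop M f) :=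
  (Measure.measurable_lintegral (hf.comp (measurable_pi_apply 1))).comp M.meas_law

lemma meas_Qop (hst : IsPathStoppingTime τ) (hf : Measurable f) : Measurable (Qop M τ f) := by
  have : Qop M τ f = fun y => ∫⁻ ω, gQ τ f ω ∂M.law y := funext fun y => Qop_eq hst y
  rw [this]
  exact (Measure.measurable_lintegral (meas_gQ hst hf)).comp M.meas_law

lemma meas_Sop (hst : IsPathStoppingTime τ) (hf : Measurable f) : Measurable (Sop M τ f) := by
  have : Sop M τ f = fun y => ∫⁻ ω, gS τ f ω ∂M.law y := funext fun y => Sop_eq hst y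
  rw [this]
  exact (Measure.measurable_lintegral (meas_gS hst hf)).comp M.meas_law

/-- transfer of null sets by the shift -/
lemma law_shift_null (x : X) (k : ℕ) {N : Set (ℕ → X)} (hN : MeasurableSet N)
    (h0 : ∀ y, M.law y N = 0) : M.law x (shf k ⁻¹' N) = 0 := by
  have hmk := M.markov x k Set.univ MeasurableSet.univ (N.indicator 1)
    (measurable_one.indicator hN)
  simp only [Measure.restrict_univ] at hmk
  have hL : (fun ω : ℕ → X => N.indicator (1 : (ℕ → X) → ℝ≥0∞) (fun j => ω (j + k)))
      = (shf k ⁻¹' N).indicator 1 := by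
    funext ω
    show N.indicator 1 (shf k ω) = (shf k ⁻¹' N).indicator 1 ω
    by_cases h : shf k ω ∈ N
    · rw [Set.indicator_of_mem h]; exact (Set.indicator_of_mem h 1).symm
    · rw [Set.indicator_of_notMem h]; exact (Set.indicator_of_notMem h 1).symm
  rw [hL, lintegral_indicator_one (measurable_shf k hN)] at hmk
  rw [hmk]
  have : ∀ ω : ℕ → X, ∫⁻ η, N.indicator 1 η ∂M.law (ω k) = 0 := fun ω => by
    rw [lintegral_indicator_one hN, h0]
  rw [lintegral_congr this, lintegral_zero]

/-- the set of good paths -/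
def Good (τ : (ℕ → X) → ℕ∞) : Set (ℕ → X) :=
  {ω | ∀ k : ℕ, τ (shf k ω) ≠ 0 ∧ τ (shf k ω) ≠ ⊤ ∧
      (2 ≤ τ (shf k ω) → τ (shf (k + 1) ω) = τ (shf k ω) - 1)}

lemma ae_good (hst : IsPathStoppingTime τ) (hθ : ThetaCompatible M τ)
    (hfin : ∀ x, M.law x {ω | τ ω = ⊤} = 0) (x : X) :
    ∀ᵐ ω ∂M.law x, ω ∈ Good τ := by
  set N : Set (ℕ → X) :=
    {ω | τ ω = 0} ∪ {ω | τ ω = ⊤} ∪ {ω | 2 ≤ τ ω ∧ τ (pshift ω) ≠ τ ω - 1} with hNdef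
  have hNmeas : MeasurableSet N := by
    refine ((measSet_pre hst fun t => t = 0).union (measSet_pre hst fun t => t = ⊤)).union ?_
    have h2 : {ω : ℕ → X | 2 ≤ τ ω ∧ τ (pshift ω) ≠ τ ω - 1} =
        ⋃ a : ℕ∞, ({ω : ℕ → X | τ ω = a ∧ 2 ≤ a} ∩ pshift ⁻¹' {ω | τ ω ≠ a - 1}) := by
      ext ω
      simp only [Set.mem_iUnion, Set.mem_inter_iff, Set.mem_setOf_eq, Set.mem_preimage]
      constructor
      · rintro ⟨h1, h2⟩; exact ⟨τ ω, ⟨rfl, h1⟩, h2⟩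
      · rintro ⟨a, ⟨rfl, h1⟩, h2⟩; exact ⟨h1, h2⟩
    rw [h2]
    exact MeasurableSet.iUnion fun a =>
      (measSet_pre hst fun t => t = a ∧ 2 ≤ a).inter
        (measurable_pshift (measSet_pre hst fun t => t ≠ a - 1))
  have hN0 : ∀ y, M.law y N = 0 := by
    intro y
    refine measure_union_null (measure_union_null (hθ.1 y) (hfin y)) ?_
    have := ae_iff.mp (hθ.2 y)
    refine le_antisymm (le_trans (measure_mono ?_) this.le) zero_le
    intro ω hω
    simp only [Set.mem_setOf_eq] at hω ⊢
    tauto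
  have hk : ∀ k : ℕ, ∀ᵐ ω ∂M.law x, shf k ω ∉ N := by
    intro k
    have := law_shift_null x k hNmeas hN0
    exact measure_eq_zero_iff_ae_notMem.mp this
  filter_upwards [ae_all_iff.mpr hk] with ω hω
  intro k
  have h1 := hω k
  have h2 : ¬(τ (shf k ω) = 0 ∨ τ (shf k ω) = ⊤ ∨
      (2 ≤ τ (shf k ω) ∧ τ (pshift (shf k ω)) ≠ τ (shf k ω) - 1)) := by
    intro hc
    apply h1
    rcases hc with h | h | h
    · exact Or.inl (Or.inl h)
    · exact Or.inl (Or.inr h)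
    · exact Or.inr h
  push_neg at h2
  obtain ⟨ha, hb, hc⟩ := h2
  refine ⟨ha, hb, fun h2le => ?_⟩
  rw [← pshift_shf]
  exact hc h2le

lemma tau_shf_good {ω : ℕ → X} (hω : ω ∈ Good τ) {m : ℕ} (hm : τ ω = (m : ℕ∞)) :
    ∀ k : ℕ, k < m → τ (shf k ω) = ((m - k : ℕ) : ℕ∞) := by
  intro k
  induction k with
  | zero =>
    intro _
    simp [shf_zero, hm]
  | succ k ih =>
    intro hk
    have h1 : τ (shf k ω) = ((m - k : ℕ) : ℕ∞) := ih (by omega)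
    have h2 : 2 ≤ τ (shf k ω) := by
      rw [h1]
      exact_mod_cast (by omega : 2 ≤ m - k)
    have h3 := (hω k).2.2 h2
    have h4 : ((m - k : ℕ) : ℕ∞) - 1 = ((m - (k + 1) : ℕ) : ℕ∞) := by
      rw [← Nat.cast_one, ← ENat.coe_sub]
      congr 1
    rw [h3, h1, h4]

end ops


section dec

variable {M : MarkovChain X} {τ : (ℕ → X) → ℕ∞} {f : X → ℝ≥0∞}

/-- `q_n = ∫_{τ=n} f(ω_n)` -/
def qk (M : MarkovChain X) (τ : (ℕ → X) → ℕ∞) (f : X → ℝ≥0∞) (x : X) (n : ℕ) : ℝ≥0∞ :=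
  ∫⁻ ω in {ω | τ ω = (n : ℕ∞)}, f (ω n) ∂M.law x

/-- `r_k = ∫_{τ>k} f(ω_k)` -/
def rk (M : MarkovChain X) (τ : (ℕ → X) → ℕ∞) (f : X → ℝ≥0∞) (x : X) (k : ℕ) : ℝ≥0∞ :=
  ∫⁻ ω in {ω | (k : ℕ∞) < τ ω}, f (ω k) ∂M.law x

lemma Qdec (hst : IsPathStoppingTime τ) (x : X) :
    Qop M τ f x = ∑' n, qk M τ f x n := by
  have hset : {ω : ℕ → X | τ ω ≠ ⊤} = ⋃ n : ℕ, {ω : ℕ → X | τ ω = (n : ℕ∞)} := by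
    ext ω
    simp only [Set.mem_setOf_eq, Set.mem_iUnion]
    cases hτ : τ ω with
    | top => simp
    | coe m => simp only [ne_eq, ENat.coe_ne_top, not_false_eq_true, true_iff]; exact ⟨m, rfl⟩
  have hdisj : Pairwise (Function.onFun Disjoint fun n : ℕ => {ω : ℕ → X | τ ω = (n : ℕ∞)}) := by
    intro i j hij
    refine Set.disjoint_left.mpr fun ω hi hj => hij ?_
    rw [Set.mem_setOf_eq] at hi hj
    exact Nat.cast_injective (hi.symm.trans hj)
  simp only [Qop, qk]
  rw [hset, lintegral_iUnion (s := fun n : ℕ => {ω : ℕ → X | τ ω = (n : ℕ∞)})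
    (fun n => measSet_pre hst fun t => t = (n : ℕ∞)) hdisj]
  exact tsum_congr fun n => setLIntegral_congr_fun_ae (measSet_pre hst fun t => t = (n : ℕ∞))
    (ae_of_all _ fun ω hω => by
      rw [Set.mem_setOf_eq] at hω
      rw [hω, ENat.toNat_coe])

lemma gR_eq_tsum_lt {ω : ℕ → X} : gR τ f ω =
    ∑' k : ℕ, ({ω : ℕ → X | (k : ℕ∞) < τ ω ∧ τ ω ≠ ⊤}.indicator (fun ω => f (ω k))) ω := by
  cases hτ : τ ω with
  | top =>
    rw [gR, Set.indicator_of_notMem (by simp [hτ])]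
    symm
    rw [tsum_congr fun k => Set.indicator_of_notMem (fun hc => by
      rw [Set.mem_setOf_eq, hτ] at hc; exact hc.2 rfl) _]
    exact tsum_zero
  | coe m =>
    rw [gR, Set.indicator_of_mem (by simp [hτ]), hτ, ENat.toNat_coe]
    symm
    rw [tsum_eq_sum (s := Finset.range m) fun k hk => Set.indicator_of_notMem (fun hc => by
      rw [Set.mem_setOf_eq, hτ] at hc
      exact hk (Finset.mem_range.mpr (by exact_mod_cast hc.1)) ) _]
    refine Finset.sum_congr rfl fun k hk => ?_
    exact Set.indicator_of_mem (by
      rw [Set.mem_setOf_eq, hτ]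
      exact ⟨by exact_mod_cast Finset.mem_range.mp hk, by simp⟩) _

lemma Rdec (hst : IsPathStoppingTime τ) (hfin : ∀ y, M.law y {ω | τ ω = ⊤} = 0)
    (hf : Measurable f) (x : X) :
    Rop M τ f x = ∑' k, rk M τ f x k := by
  rw [Rop_eq hst x, lintegral_congr fun ω => gR_eq_tsum_lt (ω := ω),
    lintegral_tsum (f := fun (k : ℕ) => {ω : ℕ → X | (k : ℕ∞) < τ ω ∧ τ ω ≠ ⊤}.indicator
      (fun ω => f (ω k)))
      fun k => ((hf.comp (measurable_pi_apply k)).indicator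
      (measSet_pre hst fun t => (k : ℕ∞) < t ∧ t ≠ ⊤)).aemeasurable]
  refine tsum_congr fun k => ?_
  rw [lintegral_indicator (measSet_pre hst fun t => (k : ℕ∞) < t ∧ t ≠ ⊤)]
  have hae : {ω : ℕ → X | (k : ℕ∞) < τ ω ∧ τ ω ≠ ⊤} =ᵐ[M.law x]
      {ω : ℕ → X | (k : ℕ∞) < τ ω} := by
    rw [ae_eq_set]
    constructor
    · rw [show {ω : ℕ → X | (k : ℕ∞) < τ ω ∧ τ ω ≠ ⊤} \ {ω : ℕ → X | (k : ℕ∞) < τ ω} = ∅ from by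
        ext ω
        simp only [Set.mem_diff, Set.mem_setOf_eq, Set.mem_empty_iff_false, iff_false, not_and,
          not_not]
        tauto]
      exact measure_empty
    · refine measure_mono_null (fun ω hω => ?_) (hfin x)
      rcases hω with ⟨h1, h2⟩
      rw [Set.mem_setOf_eq] at h1 h2 ⊢
      by_contra hne
      exact h2 ⟨h1, hne⟩
  rw [Measure.restrict_congr_set hae]
  rfl

lemma qk_zero (hθ : ThetaCompatible M τ) (x : X) : qk M τ f x 0 = 0 := by
  have h0 : M.law x {ω : ℕ → X | τ ω = ((0 : ℕ) : ℕ∞)} = 0 := by simpa using hθ.1 x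
  simp only [qk]
  rw [Measure.restrict_eq_zero.mpr h0, lintegral_zero_measure]

lemma rk_zero (hst : IsPathStoppingTime τ) (hθ : ThetaCompatible M τ) (hf : Measurable f)
    (x : X) : rk M τ f x 0 = f x := by
  have hsplit := lintegral_add_compl (fun ω : ℕ → X => f (ω 0))
    (measSet_pre hst fun t => ((0 : ℕ) : ℕ∞) < t) (μ := M.law x)
  have hc : {ω : ℕ → X | ((0 : ℕ) : ℕ∞) < τ ω}ᶜ = {ω : ℕ → X | τ ω = 0} := by
    ext ω
    simp only [Set.mem_compl_iff, Set.mem_setOf_eq, not_lt, Nat.cast_zero]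
    exact ⟨fun h => le_antisymm h zero_le, fun h => h.le⟩
  have h0 : ∫⁻ ω in {ω : ℕ → X | ((0 : ℕ) : ℕ∞) < τ ω}ᶜ, f (ω 0) ∂M.law x = 0 := by
    rw [Measure.restrict_eq_zero.mpr (by rw [hc]; exact hθ.1 x), lintegral_zero_measure]
  rw [law_eval0 x hf] at hsplit
  simp only [rk]
  rw [← hsplit, h0, add_zero]

lemma step_P (hst : IsPathStoppingTime τ) (hf : Measurable f) (x : X) (k : ℕ) :
    rk M τ (Pop M f) x k = qk M τ f x (k + 1) + rk M τ f x (k + 1) := by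
  have hmk := M.markov x k _ (filt_lt hst k) (fun η => f (η 1))
    (hf.comp (measurable_pi_apply 1))
  simp only [Nat.add_comm 1 k] at hmk
  have h1 : rk M τ (Pop M f) x k
      = ∫⁻ ω in {ω : ℕ → X | (k : ℕ∞) < τ ω}, f (ω (k + 1)) ∂M.law x := by
    simp only [rk]
    exact hmk.symm
  have hset : {ω : ℕ → X | (k : ℕ∞) < τ ω} =
      {ω : ℕ → X | τ ω = ((k + 1 : ℕ) : ℕ∞)} ∪ {ω : ℕ → X | ((k + 1 : ℕ) : ℕ∞) < τ ω} := by
    ext ω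
    simp only [Set.mem_setOf_eq, Set.mem_union]
    cases hτ : τ ω with
    | top => exact ⟨fun _ => Or.inr (ENat.coe_lt_top _), fun _ => ENat.coe_lt_top _⟩
    | coe m =>
      constructor
      · intro h
        have hk : k < m := by exact_mod_cast h
        rcases Nat.lt_or_ge (k + 1) m with h' | h'
        · exact Or.inr (by exact_mod_cast h')
        · exact Or.inl (by exact_mod_cast (by omega : m = k + 1))
      · rintro (h | h)
        · have : m = k + 1 := by exact_mod_cast h
          exact_mod_cast (by omega : k < m)
        · have : k + 1 < m := by exact_mod_cast h
          exact_mod_cast (by omega : k < m)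
  have hdisj : Disjoint {ω : ℕ → X | τ ω = ((k + 1 : ℕ) : ℕ∞)}
      {ω : ℕ → X | ((k + 1 : ℕ) : ℕ∞) < τ ω} := by
    refine Set.disjoint_left.mpr fun ω h1 h2 => ?_
    rw [Set.mem_setOf_eq] at h1 h2
    rw [h1] at h2
    exact lt_irrefl _ h2
  rw [h1, hset, lintegral_union (measSet_pre hst fun t => ((k + 1 : ℕ) : ℕ∞) < t) hdisj]
  rfl

end dec

section main

variable {M : MarkovChain X} {τ : (ℕ → X) → ℕ∞} {f : X → ℝ≥0∞}

lemma split1 (hst : IsPathStoppingTime τ) (hθ : ThetaCompatible M τ) (x : X)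
    (G : (ℕ → X) → ℝ≥0∞) :
    ∫⁻ ω, G ω ∂M.law x =
      ∫⁻ ω in {ω | τ ω = 1}, G ω ∂M.law x + ∫⁻ ω in {ω | 2 ≤ τ ω}, G ω ∂M.law x := by
  have hA : MeasurableSet ({ω : ℕ → X | τ ω = 1} ∪ {ω : ℕ → X | 2 ≤ τ ω}) :=
    (measSet_pre hst fun t => t = 1).union (measSet_pre hst fun t => 2 ≤ t)
  have hcompl : ({ω : ℕ → X | τ ω = 1} ∪ {ω : ℕ → X | 2 ≤ τ ω})ᶜ = {ω : ℕ → X | τ ω = 0} := by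
    ext ω
    simp only [Set.mem_compl_iff, Set.mem_union, Set.mem_setOf_eq, not_or]
    cases hτ : τ ω with
    | top =>
      constructor
      · rintro ⟨_, h2⟩; exact absurd le_top h2
      · intro h; exact absurd h (by simp)
    | coe m =>
      constructor
      · rintro ⟨h1, h2⟩
        have hm1 : m ≠ 1 := fun h => h1 (by rw [h]; exact Nat.cast_one)
        have hm2 : ¬(2 : ℕ) ≤ m := fun h => h2 (by exact_mod_cast h)
        have hm0 : m = 0 := by omega
        rw [hm0]; exact Nat.cast_zero
      · intro h
        have hm : m = 0 := by exact_mod_cast h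
        subst hm
        constructor
        · intro hc
          exact absurd (by exact_mod_cast hc : (0 : ℕ) = 1) (by omega)
        · intro hc
          exact absurd (by exact_mod_cast hc : (2 : ℕ) ≤ 0) (by omega)
  have h0 : ∫⁻ ω in ({ω : ℕ → X | τ ω = 1} ∪ {ω : ℕ → X | 2 ≤ τ ω})ᶜ, G ω ∂M.law x = 0 := by
    rw [Measure.restrict_eq_zero.mpr (by rw [hcompl]; exact hθ.1 x), lintegral_zero_measure]
  have hdisj : Disjoint {ω : ℕ → X | τ ω = 1} {ω : ℕ → X | 2 ≤ τ ω} := by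
    refine Set.disjoint_left.mpr fun ω h1 h2 => ?_
    rw [Set.mem_setOf_eq] at h1 h2
    rw [h1] at h2
    exact absurd (by exact_mod_cast h2 : (2 : ℕ) ≤ 1) (by omega)
  calc ∫⁻ ω, G ω ∂M.law x
      = ∫⁻ ω in {ω : ℕ → X | τ ω = 1} ∪ {ω : ℕ → X | 2 ≤ τ ω}, G ω ∂M.law x
        + ∫⁻ ω in ({ω : ℕ → X | τ ω = 1} ∪ {ω : ℕ → X | 2 ≤ τ ω})ᶜ, G ω ∂M.law x :=
        (lintegral_add_compl G hA).symm
    _ = ∫⁻ ω in {ω | τ ω = 1}, G ω ∂M.law x + ∫⁻ ω in {ω | 2 ≤ τ ω}, G ω ∂M.law x := by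
        rw [h0, add_zero, lintegral_union (measSet_pre hst fun t => 2 ≤ t) hdisj]

lemma exists_coe_of_good {ω : ℕ → X} (hg : ω ∈ Good τ) : ∃ m : ℕ, τ ω = (m : ℕ∞) := by
  have h := (hg 0).2.1
  rw [shf_zero] at h
  cases hτ : τ ω with
  | top => exact absurd hτ h
  | coe m => exact ⟨m, rfl⟩

lemma starR (hst : IsPathStoppingTime τ) (hθ : ThetaCompatible M τ)
    (hfin : ∀ y, M.law y {ω | τ ω = ⊤} = 0) (hf : Measurable f) (x : X) :
    Rop M τ f x = f x + ∫⁻ ω in {ω | 2 ≤ τ ω}, Rop M τ f (ω 1) ∂M.law x := by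
  have key := split1 hst hθ x (gR τ f)
  have hA : ∫⁻ ω in {ω : ℕ → X | τ ω = 1}, gR τ f ω ∂M.law x
      = ∫⁻ ω in {ω : ℕ → X | τ ω = 1}, f (ω 0) ∂M.law x := by
    refine setLIntegral_congr_fun_ae (measSet_pre hst fun t => t = 1) (ae_of_all _ fun ω hω => ?_)
    rw [Set.mem_setOf_eq] at hω
    simp only [gR]
    rw [Set.indicator_of_mem (by rw [Set.mem_setOf_eq, hω]; simp)]
    rw [hω]
    simp
  have hB : ∀ᵐ ω ∂M.law x, ω ∈ {ω : ℕ → X | 2 ≤ τ ω} →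
      gR τ f ω = f (ω 0) + gR τ f (pshift ω) := by
    filter_upwards [ae_good hst hθ hfin x] with ω hg hmem
    obtain ⟨m, hm⟩ := exists_coe_of_good hg
    have hm2 : 2 ≤ m := by rw [hm] at hmem; exact_mod_cast hmem
    obtain ⟨n, rfl⟩ : ∃ n, m = n + 1 := ⟨m - 1, by omega⟩
    have hps : τ (pshift ω) = ((n + 1 - 1 : ℕ) : ℕ∞) := by
      rw [← shf_one]; exact tau_shf_good hg hm 1 (by omega)
    simp only [Nat.add_sub_cancel] at hps
    simp only [gR]
    rw [Set.indicator_of_mem (by rw [Set.mem_setOf_eq, hm]; exact ENat.coe_ne_top _),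
        Set.indicator_of_mem (by rw [Set.mem_setOf_eq, hps]; exact ENat.coe_ne_top _)]
    rw [hm, hps, ENat.toNat_coe, ENat.toNat_coe, Finset.sum_range_succ', add_comm]
    rfl
  have hBsplit : ∫⁻ ω in {ω : ℕ → X | 2 ≤ τ ω}, gR τ f ω ∂M.law x
      = ∫⁻ ω in {ω : ℕ → X | 2 ≤ τ ω}, f (ω 0) ∂M.law x
        + ∫⁻ ω in {ω : ℕ → X | 2 ≤ τ ω}, gR τ f (pshift ω) ∂M.law x := by
    rw [setLIntegral_congr_fun_ae (measSet_pre hst fun t => 2 ≤ t) hB]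
    exact lintegral_add_left (hf.comp (measurable_pi_apply 0)) _
  have hmk := M.markov x 1 _ (filt_ge2 hst) (gR τ f) (meas_gR hst hf)
  have hB2 : ∫⁻ ω in {ω : ℕ → X | 2 ≤ τ ω}, gR τ f (pshift ω) ∂M.law x
      = ∫⁻ ω in {ω : ℕ → X | 2 ≤ τ ω}, Rop M τ f (ω 1) ∂M.law x := by
    calc ∫⁻ ω in {ω : ℕ → X | 2 ≤ τ ω}, gR τ f (pshift ω) ∂M.law x
        = ∫⁻ ω in {ω : ℕ → X | 2 ≤ τ ω}, ∫⁻ η, gR τ f η ∂M.law (ω 1) ∂M.law x := hmk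
      _ = ∫⁻ ω in {ω : ℕ → X | 2 ≤ τ ω}, Rop M τ f (ω 1) ∂M.law x :=
          setLIntegral_congr_fun_ae (measSet_pre hst fun t => 2 ≤ t)
            (ae_of_all _ fun ω _ => (Rop_eq hst (ω 1)).symm)
  rw [Rop_eq hst x, key, hA, hBsplit, hB2, ← add_assoc]
  congr 1
  exact ((split1 hst hθ x fun ω => f (ω 0)).symm).trans (law_eval0 x hf)

lemma starQ (hst : IsPathStoppingTime τ) (hθ : ThetaCompatible M τ)
    (hfin : ∀ y, M.law y {ω | τ ω = ⊤} = 0) (hf : Measurable f) (x : X) :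
    Qop M τ f x = Sop M τ f x + ∫⁻ ω in {ω | 2 ≤ τ ω}, Qop M τ f (ω 1) ∂M.law x := by
  have key := split1 hst hθ x (gQ τ f)
  have hA : ∫⁻ ω in {ω : ℕ → X | τ ω = 1}, gQ τ f ω ∂M.law x
      = ∫⁻ ω in {ω : ℕ → X | τ ω = 1}, f (ω 1) ∂M.law x := by
    refine setLIntegral_congr_fun_ae (measSet_pre hst fun t => t = 1) (ae_of_all _ fun ω hω => ?_)
    rw [Set.mem_setOf_eq] at hω
    simp only [gQ]
    rw [Set.indicator_of_mem (by rw [Set.mem_setOf_eq, hω]; simp)]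
    rw [hω]
    simp
  have hB : ∀ᵐ ω ∂M.law x, ω ∈ {ω : ℕ → X | 2 ≤ τ ω} →
      gQ τ f ω = gQ τ f (pshift ω) := by
    filter_upwards [ae_good hst hθ hfin x] with ω hg hmem
    obtain ⟨m, hm⟩ := exists_coe_of_good hg
    have hm2 : 2 ≤ m := by rw [hm] at hmem; exact_mod_cast hmem
    have hps : τ (pshift ω) = ((m - 1 : ℕ) : ℕ∞) := by
      rw [← shf_one]; exact tau_shf_good hg hm 1 (by omega)
    simp only [gQ]
    rw [Set.indicator_of_mem (by rw [Set.mem_setOf_eq, hm]; exact ENat.coe_ne_top _),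
        Set.indicator_of_mem (by rw [Set.mem_setOf_eq, hps]; exact ENat.coe_ne_top _)]
    rw [hm, hps, ENat.toNat_coe, ENat.toNat_coe]
    show f (ω m) = f (ω (m - 1 + 1))
    rw [Nat.sub_add_cancel (by omega)]
  have hBcongr : ∫⁻ ω in {ω : ℕ → X | 2 ≤ τ ω}, gQ τ f ω ∂M.law x
      = ∫⁻ ω in {ω : ℕ → X | 2 ≤ τ ω}, gQ τ f (pshift ω) ∂M.law x :=
    setLIntegral_congr_fun_ae (measSet_pre hst fun t => 2 ≤ t) hB
  have hmk := M.markov x 1 _ (filt_ge2 hst) (gQ τ f) (meas_gQ hst hf)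
  have hB2 : ∫⁻ ω in {ω : ℕ → X | 2 ≤ τ ω}, gQ τ f (pshift ω) ∂M.law x
      = ∫⁻ ω in {ω : ℕ → X | 2 ≤ τ ω}, Qop M τ f (ω 1) ∂M.law x := by
    calc ∫⁻ ω in {ω : ℕ → X | 2 ≤ τ ω}, gQ τ f (pshift ω) ∂M.law x
        = ∫⁻ ω in {ω : ℕ → X | 2 ≤ τ ω}, ∫⁻ η, gQ τ f η ∂M.law (ω 1) ∂M.law x := hmk
      _ = ∫⁻ ω in {ω : ℕ → X | 2 ≤ τ ω}, Qop M τ f (ω 1) ∂M.law x :=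
          setLIntegral_congr_fun_ae (measSet_pre hst fun t => 2 ≤ t)
            (ae_of_all _ fun ω _ => (Qop_eq hst (ω 1)).symm)
  rw [Qop_eq hst x, key, hA, hBcongr, hB2]
  rfl

lemma id1 (hst : IsPathStoppingTime τ) (hθ : ThetaCompatible M τ)
    (hfin : ∀ y, M.law y {ω | τ ω = ⊤} = 0) (hf : Measurable f) (x : X) :
    Rop M τ f x + Qop M τ f x = f x + Rop M τ (Pop M f) x := by
  rw [Rdec hst hfin hf x, Qdec hst x, Rdec hst hfin (meas_Pop hf) x]
  rw [show (∑' k, rk M τ (Pop M f) x k) = ∑' k, (qk M τ f x (k + 1) + rk M τ f x (k + 1)) from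
    tsum_congr fun k => step_P hst hf x k]
  rw [ENNReal.tsum_add]
  rw [tsum_eq_zero_add' (f := fun n => qk M τ f x n) ENNReal.summable,
      tsum_eq_zero_add' (f := fun k => rk M τ f x k) ENNReal.summable]
  rw [qk_zero hθ x, rk_zero hst hθ hf x, zero_add]
  ring

lemma id2 (hst : IsPathStoppingTime τ) (hθ : ThetaCompatible M τ)
    (hfin : ∀ y, M.law y {ω | τ ω = ⊤} = 0) (hf : Measurable f) (x : X) :
    f x + Pop M (Rop M τ f) x = Rop M τ f x + Sop M τ (Rop M τ f) x := by
  have hsplit : Pop M (Rop M τ f) x = Sop M τ (Rop M τ f) x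
      + ∫⁻ ω in {ω | 2 ≤ τ ω}, Rop M τ f (ω 1) ∂M.law x :=
    split1 hst hθ x fun ω => Rop M τ f (ω 1)
  rw [hsplit, starR hst hθ hfin hf x]
  ring

lemma id3 (hst : IsPathStoppingTime τ) (hθ : ThetaCompatible M τ)
    (hfin : ∀ y, M.law y {ω | τ ω = ⊤} = 0) (hf : Measurable f) (x : X) :
    Sop M τ f x + Pop M (Qop M τ f) x = Sop M τ (Qop M τ f) x + Qop M τ f x := by
  have hsplit : Pop M (Qop M τ f) x = Sop M τ (Qop M τ f) x
      + ∫⁻ ω in {ω | 2 ≤ τ ω}, Qop M τ f (ω 1) ∂M.law x :=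
    split1 hst hθ x fun ω => Qop M τ f (ω 1)
  rw [hsplit, starQ hst hθ hfin hf x]
  ring

lemma id4 (hst : IsPathStoppingTime τ) (hθ : ThetaCompatible M τ)
    (hfin : ∀ y, M.law y {ω | τ ω = ⊤} = 0) (hf : Measurable f) (x : X) :
    Rop M τ (Sop M τ f) x = Qop M τ f x := by
  rw [Rdec hst hfin (meas_Sop hst hf) x, Qdec hst x]
  rw [tsum_eq_zero_add' (f := fun n => qk M τ f x n) ENNReal.summable, qk_zero hθ x, zero_add]
  refine tsum_congr fun k => ?_
  have hmk := M.markov x k _ (filt_lt hst k) (gS τ f) (meas_gS hst hf)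
  have hR : rk M τ (Sop M τ f) x k
      = ∫⁻ ω in {ω : ℕ → X | (k : ℕ∞) < τ ω}, gS τ f (fun j => ω (j + k)) ∂M.law x := by
    have h1 : rk M τ (Sop M τ f) x k
        = ∫⁻ ω in {ω : ℕ → X | (k : ℕ∞) < τ ω}, ∫⁻ η, gS τ f η ∂M.law (ω k) ∂M.law x := by
      simp only [rk]
      exact setLIntegral_congr_fun_ae (measSet_pre hst fun t => (k : ℕ∞) < t)
        (ae_of_all _ fun ω _ => Sop_eq hst (ω k))
    rw [h1]
    exact hmk.symm
  rw [hR]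
  have hae : ∀ᵐ ω ∂M.law x, ω ∈ {ω : ℕ → X | (k : ℕ∞) < τ ω} →
      gS τ f (fun j => ω (j + k)) =
        ({ω : ℕ → X | τ ω = ((k + 1 : ℕ) : ℕ∞)}.indicator (fun ω => f (ω (k + 1)))) ω := by
    filter_upwards [ae_good hst hθ hfin x] with ω hg hmem
    obtain ⟨m, hm⟩ := exists_coe_of_good hg
    have hkm : k < m := by rw [hm] at hmem; exact_mod_cast hmem
    have hτs : τ (shf k ω) = ((m - k : ℕ) : ℕ∞) := tau_shf_good hg hm k hkm
    show gS τ f (shf k ω) = _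
    by_cases h1 : m = k + 1
    · have hmem1 : shf k ω ∈ {ω : ℕ → X | τ ω = 1} := by
        rw [Set.mem_setOf_eq, hτs, show m - k = 1 from by omega]
        exact Nat.cast_one
      have hmem2 : ω ∈ {ω : ℕ → X | τ ω = ((k + 1 : ℕ) : ℕ∞)} := by
        rw [Set.mem_setOf_eq, hm, h1]
      simp only [gS]
      rw [Set.indicator_of_mem hmem1, Set.indicator_of_mem hmem2]
      exact congrArg f (congrArg ω (Nat.add_comm 1 k))
    · have hnm1 : shf k ω ∉ {ω : ℕ → X | τ ω = 1} := by
        rw [Set.mem_setOf_eq, hτs]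
        intro hc
        have : m - k = 1 := by exact_mod_cast hc
        omega
      have hnm2 : ω ∉ {ω : ℕ → X | τ ω = ((k + 1 : ℕ) : ℕ∞)} := by
        rw [Set.mem_setOf_eq, hm]
        intro hc
        exact h1 (by exact_mod_cast hc)
      simp only [gS]
      rw [Set.indicator_of_notMem hnm1, Set.indicator_of_notMem hnm2]
  rw [setLIntegral_congr_fun_ae (measSet_pre hst fun t => (k : ℕ∞) < t) hae]
  rw [lintegral_indicator (measSet_pre hst fun t => t = ((k + 1 : ℕ) : ℕ∞)),
    Measure.restrict_restrict (measSet_pre hst fun t => t = ((k + 1 : ℕ) : ℕ∞))]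
  rw [show {ω : ℕ → X | τ ω = ((k + 1 : ℕ) : ℕ∞)} ∩ {ω : ℕ → X | (k : ℕ∞) < τ ω}
      = {ω : ℕ → X | τ ω = ((k + 1 : ℕ) : ℕ∞)} from
    Set.inter_eq_left.mpr fun ω hω => by
      rw [Set.mem_setOf_eq] at hω ⊢
      rw [hω]
      exact_mod_cast Nat.lt_succ_self k]
  rfl

end main


end Stmt0Aux


/-- Proposition 1.5: for a θ-compatible stopping time, the identities
`(R+Q)f = f + RPf`, `f + PRf = Rf + SRf`, `Sf + PQf = SQf + Qf` and `RSf = Qf`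
hold pointwise for every nonnegative borelian `f`, as equalities in `[0,∞]`. -/
theorem stmt0 (M : MarkovChain X) (τ : (ℕ → X) → ℕ∞)
    (hst : IsPathStoppingTime τ) (hθ : ThetaCompatible M τ)
    (hfin : ∀ x, M.law x {ω | τ ω = ⊤} = 0)
    (f : X → ℝ≥0∞) (hf : Measurable f) (x : X) :
    Rop M τ f x + Qop M τ f x = f x + Rop M τ (Pop M f) x ∧
    f x + Pop M (Rop M τ f) x = Rop M τ f x + Sop M τ (Rop M τ f) x ∧
    Sop M τ f x + Pop M (Qop M τ f) x = Sop M τ (Qop M τ f) x + Qop M τ f x ∧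
    Rop M τ (Sop M τ f) x = Qop M τ f x :=
  ⟨Stmt0Aux.id1 hst hθ hfin hf x, Stmt0Aux.id2 hst hθ hfin hf x,
    Stmt0Aux.id3 hst hθ hfin hf x, Stmt0Aux.id4 hst hθ hfin hf x⟩

end
end

section
/- (Generalized Kac lemma.) Let μ be a finite P-invariant borelian measure on 𝐗 and let τ be a θ-compatible stopping time such that for μ-almost every x ∈ 𝐗, ℙ_x(τ ≥ n) → 0 as n → ∞. Then for every nonnegative borelian function f on 𝐗, ∫_𝐗 f dμ = ∫_𝐗 SRf dμ. -/
open MeasureTheory Filter Set Topology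
open scoped ENNReal NNReal ENat

noncomputable section

variable {X : Type*} [MeasurableSpace X]

section KacAux

variable {X : Type*} [MeasurableSpace X]

lemma pathFiltration_le (n : ℕ) : pathFiltration X n ≤ (inferInstance : MeasurableSpace (ℕ → X)) := by
  intro s hs
  obtain ⟨t, ht, rfl⟩ := hs
  exact (measurable_pi_lambda _ fun i => measurable_pi_apply _) ht

lemma pathFiltration_mono {m n : ℕ} (h : m ≤ n) : pathFiltration X m ≤ pathFiltration X n := by
  intro s hs
  obtain ⟨t, ht, rfl⟩ := hs
  refine ⟨(fun v : Fin (n+1) → X => fun i : Fin (m+1) => v (Fin.castLE (by omega) i)) ⁻¹' t,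
    (measurable_pi_lambda _ fun i => measurable_pi_apply _) ht, ?_⟩
  ext ω; simp

lemma enat_two_le_iff (t : ℕ∞) : 2 ≤ t ↔ ¬(t = 0 ∨ t = 1) := by
  induction t using ENat.recTopCoe with
  | top => simp
  | coe m =>
    simp only [show ((0:ℕ∞)) = ((0:ℕ):ℕ∞) from rfl, show ((1:ℕ∞)) = ((1:ℕ):ℕ∞) from rfl,
      show ((2:ℕ∞)) = ((2:ℕ):ℕ∞) from rfl, Nat.cast_le, Nat.cast_inj]
    omega

lemma enat_sub_one (t : ℕ∞) (ht : 2 ≤ t) (j : ℕ) :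
    ((j : ℕ∞) < t - 1 ∧ t - 1 ≠ ⊤) ↔ ((j + 1 : ℕ) : ℕ∞) < t ∧ t ≠ ⊤ := by
  induction t using ENat.recTopCoe with
  | top => simp
  | coe m =>
    have hm : 2 ≤ m := by exact_mod_cast ht
    rw [show ((m : ℕ∞) - 1) = ((m - 1 : ℕ) : ℕ∞) by push_cast; rfl]
    simp only [ne_eq, ENat.coe_ne_top, not_false_iff, and_true, Nat.cast_lt]
    omega

lemma enat_lt_two (t : ℕ∞) : ¬ 2 ≤ t ↔ t = 0 ∨ t = 1 := by
  rw [enat_two_le_iff, not_not]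

section tau

variable {τ : (ℕ → X) → ℕ∞}

lemma measSet_eq (hst : IsPathStoppingTime τ) (n : ℕ) :
    MeasurableSet {ω | τ ω = (n : ℕ∞)} := pathFiltration_le n _ (hst n)

lemma measSet_ne_top (hst : IsPathStoppingTime τ) : MeasurableSet {ω | τ ω ≠ ⊤} := by
  have : {ω | τ ω ≠ ⊤} = ⋃ n : ℕ, {ω | τ ω = (n : ℕ∞)} := by
    ext ω
    simp only [mem_setOf_eq, mem_iUnion]
    rw [ENat.ne_top_iff_exists]
    exact ⟨fun ⟨a, ha⟩ => ⟨a, ha.symm⟩, fun ⟨a, ha⟩ => ⟨a, ha.symm⟩⟩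
  rw [this]
  exact MeasurableSet.iUnion fun n => measSet_eq hst n

lemma measSet_lt (hst : IsPathStoppingTime τ) (k : ℕ) :
    MeasurableSet {ω | (k : ℕ∞) < τ ω} := by
  have : {ω | (k : ℕ∞) < τ ω} = (⋃ j : ℕ, ⋃ _ : j ≤ k, {ω | τ ω = (j : ℕ∞)})ᶜ := by
    ext ω
    simp only [mem_setOf_eq, mem_compl_iff, mem_iUnion, not_exists]
    constructor
    · intro h j hj hje
      rw [hje] at h
      exact absurd (by exact_mod_cast h) (by omega)
    · intro h
      by_contra hlt
      push_neg at hlt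
      have hne : τ ω ≠ ⊤ := ne_top_of_le_ne_top (by simp) hlt
      lift τ ω to ℕ using hne with m
      exact h m (by exact_mod_cast hlt) rfl
  rw [this]
  exact (MeasurableSet.iUnion fun j => MeasurableSet.iUnion fun _ => measSet_eq hst j).compl

lemma measSet_le (hst : IsPathStoppingTime τ) (n : ℕ) :
    MeasurableSet {ω | (n : ℕ∞) ≤ τ ω} := by
  rcases n with _ | m
  · simp
  · have : {ω | ((m + 1 : ℕ) : ℕ∞) ≤ τ ω} = {ω | (m : ℕ∞) < τ ω} := by
      ext ω
      simp only [mem_setOf_eq]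
      rw [show ((m + 1 : ℕ) : ℕ∞) = (m : ℕ∞) + 1 by push_cast; rfl]
      exact ENat.add_one_le_iff (by simp)
    rw [this]
    exact measSet_lt hst m

lemma measSet_two_le (hst : IsPathStoppingTime τ) : MeasurableSet {ω | 2 ≤ τ ω} := by
  have : {ω | 2 ≤ τ ω} = {ω | ((2:ℕ) : ℕ∞) ≤ τ ω} := by norm_num
  rw [this]; exact measSet_le hst 2

lemma twoLe_mem_F1 (hst : IsPathStoppingTime τ) :
    MeasurableSet[pathFiltration X 1] {ω | 2 ≤ τ ω} := by
  have h0 : MeasurableSet[pathFiltration X 1] {ω | τ ω = 0} := by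
    have := pathFiltration_mono (X := X) (Nat.zero_le 1) _ (hst 0)
    simpa using this
  have h1 : MeasurableSet[pathFiltration X 1] {ω | τ ω = 1} := by
    have := hst 1; simpa using this
  have : {ω | 2 ≤ τ ω} = ({ω | τ ω = 0} ∪ {ω | τ ω = 1})ᶜ := by
    ext ω
    simp only [mem_setOf_eq, mem_compl_iff, mem_union]
    exact enat_two_le_iff (τ ω)
  rw [this]
  exact MeasurableSet.compl (MeasurableSet.union h0 h1)

end tau


section KacG

variable {τ : (ℕ → X) → ℕ∞} {f : X → ℝ≥0∞}

/-- truncated Birkhoff-type sums. -/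
def kacG (τ : (ℕ → X) → ℕ∞) (f : X → ℝ≥0∞) (N : ℕ) (ω : ℕ → X) : ℝ≥0∞ :=
  ∑ k ∈ Finset.range N, {ω' | (k : ℕ∞) < τ ω' ∧ τ ω' ≠ ⊤}.indicator (fun ω' => f (ω' k)) ω

lemma meas_kacG (hst : IsPathStoppingTime τ) (hf : Measurable f) (N : ℕ) :
    Measurable (kacG τ f N) :=
  Finset.measurable_sum _ fun k _ =>
    (hf.comp (measurable_pi_apply k)).indicator ((measSet_lt hst k).inter (measSet_ne_top hst))

lemma kacG_mono_N (τ : (ℕ → X) → ℕ∞) (f : X → ℝ≥0∞) (ω : ℕ → X) :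
    Monotone fun N => kacG τ f N ω := fun a b h =>
  Finset.sum_le_sum_of_subset (Finset.range_subset_range.2 h)

lemma kacG_mono_f {f g : X → ℝ≥0∞} (h : ∀ y, f y ≤ g y) (N : ℕ) (ω : ℕ → X) :
    kacG τ f N ω ≤ kacG τ g N ω :=
  Finset.sum_le_sum fun k _ => Set.indicator_le_indicator (h _)

lemma kacG_sup (τ : (ℕ → X) → ℕ∞) (f : X → ℝ≥0∞) (ω : ℕ → X) :
    (⨆ N, kacG τ f N ω) =
      {ω' | τ ω' ≠ ⊤}.indicator (fun ω' => ∑ k ∈ Finset.range (τ ω').toNat, f (ω' k)) ω := by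
  by_cases h : τ ω = ⊤
  · rw [Set.indicator_of_notMem (by simpa using h)]
    refine le_antisymm (iSup_le fun N => le_of_eq ?_) (zero_le)
    rw [kacG]
    refine Finset.sum_eq_zero fun k _ => Set.indicator_of_notMem (fun hc => hc.2 h) _
  · rw [Set.indicator_of_mem (show ω ∈ {ω' | τ ω' ≠ ⊤} from h)]
    set m := (τ ω).toNat with hm
    have hτ : τ ω = (m : ℕ∞) := (ENat.coe_toNat h).symm
    have key : ∀ N, m ≤ N → kacG τ f N ω = ∑ k ∈ Finset.range m, f (ω k) := by
      intro N hN
      have hz : ∀ k ∈ Finset.range N, k ∉ Finset.range m →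
          {ω' | (k : ℕ∞) < τ ω' ∧ τ ω' ≠ ⊤}.indicator (fun ω' => f (ω' k)) ω = 0 := by
        intro k _ hkm
        refine Set.indicator_of_notMem (fun hc => ?_) _
        have hlt : (k : ℕ∞) < τ ω := hc.1
        rw [hτ, Nat.cast_lt] at hlt
        exact hkm (Finset.mem_range.2 hlt)
      rw [kacG, ← Finset.sum_subset (Finset.range_subset_range.2 hN) hz]
      refine Finset.sum_congr rfl fun k hk => ?_
      have hmem : ω ∈ {ω' | (k : ℕ∞) < τ ω' ∧ τ ω' ≠ ⊤} := by
        refine ⟨?_, h⟩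
        rw [hτ, Nat.cast_lt]
        exact Finset.mem_range.1 hk
      exact Set.indicator_of_mem hmem _
    apply le_antisymm
    · refine iSup_le fun N => ?_
      calc kacG τ f N ω ≤ kacG τ f (max N m) ω := kacG_mono_N τ f ω (le_max_left _ _)
        _ = _ := key _ (le_max_right _ _)
    · rw [← key m le_rfl]; exact le_iSup (fun N => kacG τ f N ω) m

/-- the expected truncated sums `G_N f`. -/
def kacGN (M : MarkovChain X) (τ : (ℕ → X) → ℕ∞) (f : X → ℝ≥0∞) (N : ℕ) (x : X) : ℝ≥0∞ :=
  ∫⁻ ω, kacG τ f N ω ∂M.law x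

lemma meas_setLIntegral (M : MarkovChain X) {g : (ℕ → X) → ℝ≥0∞} (hg : Measurable g)
    {S : Set (ℕ → X)} (hS : MeasurableSet S) :
    Measurable fun x => ∫⁻ ω in S, g ω ∂M.law x := by
  have : (fun x => ∫⁻ ω in S, g ω ∂M.law x) = fun x => ∫⁻ ω, S.indicator g ω ∂M.law x := by
    funext x; rw [lintegral_indicator hS]
  rw [this]
  exact (Measure.measurable_lintegral (hg.indicator hS)).comp M.meas_law

lemma meas_kacGN (M : MarkovChain X) (hst : IsPathStoppingTime τ) (hf : Measurable f) (N : ℕ) :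
    Measurable (kacGN M τ f N) :=
  (Measure.measurable_lintegral (meas_kacG hst hf N)).comp M.meas_law

lemma kacGN_le (M : MarkovChain X) (τ : (ℕ → X) → ℕ∞) (N : ℕ) (x : X) {C : ℝ≥0∞}
    (hfC : ∀ y, f y ≤ C) : kacGN M τ f N x ≤ N * C := by
  have := M.prob x
  calc kacGN M τ f N x ≤ ∫⁻ _, (N : ℝ≥0∞) * C ∂M.law x := by
        refine lintegral_mono fun ω => ?_
        calc kacG τ f N ω ≤ ∑ _ ∈ Finset.range N, C :=
              Finset.sum_le_sum fun k _ => Set.indicator_le (fun _ _ => hfC _) ω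
          _ = N * C := by rw [Finset.sum_const, Finset.card_range, nsmul_eq_mul]
    _ = N * C := by rw [lintegral_const, measure_univ, mul_one]

lemma kacGN_mono_N (M : MarkovChain X) (τ : (ℕ → X) → ℕ∞) (f : X → ℝ≥0∞) :
    Monotone (kacGN M τ f) := fun a b h x =>
  lintegral_mono fun ω => kacG_mono_N τ f ω h

lemma kacGN_mono_f (M : MarkovChain X) {f g : X → ℝ≥0∞} (h : ∀ y, f y ≤ g y) (N : ℕ) (x : X) :
    kacGN M τ f N x ≤ kacGN M τ g N x :=
  lintegral_mono fun ω => kacG_mono_f h N ω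

lemma Rop_eq_iSup (M : MarkovChain X) (hst : IsPathStoppingTime τ) (hf : Measurable f) (x : X) :
    Rop M τ f x = ⨆ N, kacGN M τ f N x := by
  rw [Rop, ← lintegral_indicator (measSet_ne_top hst)]
  have h1 : ∀ ω, {ω' | τ ω' ≠ ⊤}.indicator
      (fun ω' => ∑ k ∈ Finset.range (τ ω').toNat, f (ω' k)) ω = ⨆ N, kacG τ f N ω :=
    fun ω => (kacG_sup τ f ω).symm
  rw [lintegral_congr h1,
    lintegral_iSup (fun N => meas_kacG hst hf N) (fun a b h ω => kacG_mono_N τ f ω h)]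
  rfl

end KacG


section KacRec

variable {τ : (ℕ → X) → ℕ∞} {f : X → ℝ≥0∞}

lemma ae_start (M : MarkovChain X) [MeasurableSingletonClass X] (x : X) :
    ∀ᵐ ω ∂M.law x, ω 0 = x := by
  rw [ae_iff]
  have hev : Measurable fun ω : ℕ → X => ω 0 := measurable_pi_apply 0
  have h2 : (M.law x).map (fun ω => ω 0) ({x}ᶜ) = 0 := by
    rw [M.start x, Measure.dirac_apply' _ (measurableSet_singleton x).compl]
    simp
  rw [Measure.map_apply hev (measurableSet_singleton x).compl] at h2
  simpa [Set.preimage] using h2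

lemma kacGN_succ_rec (M : MarkovChain X) [MeasurableSingletonClass X]
    (hst : IsPathStoppingTime τ) (hθ : ThetaCompatible M τ) (hf : Measurable f)
    (N : ℕ) (x : X) :
    kacGN M τ f (N + 1) x
      = f x * M.law x {ω | τ ω ≠ ⊤}
        + ∫⁻ ω in {ω | 2 ≤ τ ω}, kacGN M τ f N (ω 1) ∂M.law x := by
  have hae : kacG τ f (N+1) =ᵐ[M.law x]
      fun ω => {ω' | ((0:ℕ):ℕ∞) < τ ω' ∧ τ ω' ≠ ⊤}.indicator (fun ω' => f (ω' 0)) ω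
        + {ω' | 2 ≤ τ ω'}.indicator (fun ω' => kacG τ f N (pshift ω')) ω := by
    filter_upwards [hθ.2 x] with ω hω
    rw [kacG, Finset.sum_range_succ', add_comm]
    congr 1
    by_cases h2 : 2 ≤ τ ω
    · rw [Set.indicator_of_mem (show ω ∈ {ω' | 2 ≤ τ ω'} from h2)]
      have hs := hω h2
      rw [kacG]
      refine Finset.sum_congr rfl fun j _ => ?_
      by_cases hc : ((j+1:ℕ):ℕ∞) < τ ω ∧ τ ω ≠ ⊤
      · rw [Set.indicator_of_mem (show ω ∈ {ω' | ((j+1:ℕ):ℕ∞) < τ ω' ∧ τ ω' ≠ ⊤} from hc),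
          Set.indicator_of_mem (show pshift ω ∈ {ω' | (j:ℕ∞) < τ ω' ∧ τ ω' ≠ ⊤} from by
            rw [mem_setOf_eq, hs]; exact (enat_sub_one (τ ω) h2 j).2 hc)]
        rfl
      · rw [Set.indicator_of_notMem
            (show ω ∉ {ω' | ((j+1:ℕ):ℕ∞) < τ ω' ∧ τ ω' ≠ ⊤} from hc),
          Set.indicator_of_notMem (show pshift ω ∉ {ω' | (j:ℕ∞) < τ ω' ∧ τ ω' ≠ ⊤} from by
            rw [mem_setOf_eq, hs]; exact fun hcc => hc ((enat_sub_one (τ ω) h2 j).1 hcc))]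
    · rw [Set.indicator_of_notMem (show ω ∉ {ω' | 2 ≤ τ ω'} from h2)]
      refine Finset.sum_eq_zero fun j _ => Set.indicator_of_notMem (fun hc => ?_) _
      rcases (enat_lt_two _).1 h2 with h0 | h1
      · have hlt := hc.1; rw [h0] at hlt; exact absurd hlt (by simp)
      · have hlt := hc.1; rw [h1] at hlt
        have hj1 : ((j+1:ℕ):ℕ∞) < ((1:ℕ):ℕ∞) := by exact_mod_cast hlt
        rw [Nat.cast_lt] at hj1
        omega
  have hS0 : MeasurableSet {ω : ℕ → X | ((0:ℕ):ℕ∞) < τ ω ∧ τ ω ≠ ⊤} :=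
    (measSet_lt hst 0).inter (measSet_ne_top hst)
  have hS2 : MeasurableSet {ω : ℕ → X | 2 ≤ τ ω} := measSet_two_le hst
  have hm1 : Measurable fun ω' : ℕ → X => f (ω' 0) := hf.comp (measurable_pi_apply 0)
  rw [kacGN, lintegral_congr_ae hae, lintegral_add_left (hm1.indicator hS0)]
  congr 1
  · rw [lintegral_indicator hS0]
    have h1 : ∫⁻ ω in {ω' | ((0:ℕ):ℕ∞) < τ ω' ∧ τ ω' ≠ ⊤}, f (ω 0) ∂M.law x
        = ∫⁻ _ in {ω' | ((0:ℕ):ℕ∞) < τ ω' ∧ τ ω' ≠ ⊤}, f x ∂M.law x :=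
      lintegral_congr_ae (ae_restrict_of_ae ((ae_start M x).mono fun ω h => by show f (ω 0) = f x; rw [h]))
    rw [h1, setLIntegral_const]
    congr 1
    have h2 : {ω' | ((0:ℕ):ℕ∞) < τ ω' ∧ τ ω' ≠ ⊤} = {ω' | τ ω' ≠ ⊤} \ {ω' | τ ω' = 0} := by
      ext ω
      simp only [mem_setOf_eq, mem_diff, Nat.cast_zero, pos_iff_ne_zero]
      tauto
    rw [h2, measure_diff_null (hθ.1 x)]
  · rw [lintegral_indicator hS2]
    exact M.markov x 1 _ (twoLe_mem_F1 hst) (kacG τ f N) (meas_kacG hst hf N)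

lemma Pop_split (M : MarkovChain X) (hst : IsPathStoppingTime τ) {x : X}
    (h0 : M.law x {ω | τ ω = 0} = 0) (h : X → ℝ≥0∞) :
    Pop M h x = Sop M τ h x + ∫⁻ ω in {ω | 2 ≤ τ ω}, h (ω 1) ∂M.law x := by
  have h1 : MeasurableSet {ω : ℕ → X | τ ω = 1} := by
    have := measSet_eq hst 1; simpa using this
  have hA : MeasurableSet ({ω : ℕ → X | τ ω = 1} ∪ {ω | 2 ≤ τ ω}) :=
    h1.union (measSet_two_le hst)
  rw [Pop, ← lintegral_add_compl (fun ω => h (ω 1)) hA]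
  have hcompl : ({ω : ℕ → X | τ ω = 1} ∪ {ω | 2 ≤ τ ω})ᶜ = {ω | τ ω = 0} := by
    ext ω
    simp only [mem_compl_iff, mem_union, mem_setOf_eq]
    constructor
    · intro hω
      push_neg at hω
      rcases (enat_lt_two (τ ω)).1 (not_le.mpr hω.2) with h' | h'
      · exact h'
      · exact absurd h' hω.1
    · intro hω
      rintro (h' | h')
      · rw [hω] at h'; simp at h'
      · rw [hω] at h'; simp at h' 
  have hdisj : Disjoint {ω : ℕ → X | τ ω = 1} {ω | 2 ≤ τ ω} := by
    rw [Set.disjoint_left]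
    intro ω hω1 hω2
    rw [mem_setOf_eq] at hω1 hω2
    rw [enat_two_le_iff] at hω2
    exact hω2 (Or.inr hω1)
  rw [hcompl, setLIntegral_measure_zero _ _ h0, add_zero,
    lintegral_union (measSet_two_le hst) hdisj]
  rfl

lemma kacGN_succ_diff (M : MarkovChain X) (hst : IsPathStoppingTime τ) (hf : Measurable f)
    (N : ℕ) (x : X) :
    kacGN M τ f (N + 1) x = kacGN M τ f N x
      + ∫⁻ ω, {ω' | (N:ℕ∞) < τ ω' ∧ τ ω' ≠ ⊤}.indicator (fun ω' => f (ω' N)) ω ∂M.law x := by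
  rw [kacGN, kacGN, ← lintegral_add_left (meas_kacG hst hf N)]
  refine lintegral_congr fun ω => ?_
  rw [kacG, Finset.sum_range_succ]
  rfl

lemma kacGN_diff_le (M : MarkovChain X) (hst : IsPathStoppingTime τ) {C : ℝ≥0∞}
    (hfC : ∀ y, f y ≤ C) (N : ℕ) (x : X) :
    (∫⁻ ω, {ω' | (N:ℕ∞) < τ ω' ∧ τ ω' ≠ ⊤}.indicator (fun ω' => f (ω' N)) ω ∂M.law x)
      ≤ C * M.law x {ω | ((N+1:ℕ):ℕ∞) ≤ τ ω} := by
  have hsub : {ω' : ℕ → X | (N:ℕ∞) < τ ω' ∧ τ ω' ≠ ⊤} ⊆ {ω | ((N+1:ℕ):ℕ∞) ≤ τ ω} := by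
    intro ω hω
    rw [mem_setOf_eq, show ((N+1:ℕ):ℕ∞) = (N:ℕ∞)+1 by push_cast; rfl]
    exact (ENat.add_one_le_iff (by simp)).2 hω.1
  calc (∫⁻ ω, {ω' | (N:ℕ∞) < τ ω' ∧ τ ω' ≠ ⊤}.indicator (fun ω' => f (ω' N)) ω ∂M.law x)
      ≤ ∫⁻ ω, {ω | ((N+1:ℕ):ℕ∞) ≤ τ ω}.indicator (fun _ => C) ω ∂M.law x := by
        refine lintegral_mono fun ω => ?_
        by_cases hmem : ω ∈ {ω' | (N:ℕ∞) < τ ω' ∧ τ ω' ≠ ⊤}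
        · rw [Set.indicator_of_mem hmem, Set.indicator_of_mem (hsub hmem)]
          exact hfC _
        · rw [Set.indicator_of_notMem hmem]; exact zero_le
    _ = C * M.law x {ω | ((N+1:ℕ):ℕ∞) ≤ τ ω} :=
        lintegral_indicator_const (measSet_le hst (N+1)) C

end KacRec


section KacMain

variable {τ : (ℕ → X) → ℕ∞} {f : X → ℝ≥0∞}

lemma meas_Sop (M : MarkovChain X) (hst : IsPathStoppingTime τ) {g : X → ℝ≥0∞}
    (hg : Measurable g) : Measurable (Sop M τ g) := by
  have h1 : MeasurableSet {ω : ℕ → X | τ ω = 1} := by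
    have := measSet_eq hst 1; simpa using this
  exact meas_setLIntegral M (hg.comp (measurable_pi_apply 1)) h1

lemma Sop_mono (M : MarkovChain X) {g h : X → ℝ≥0∞} (hgh : ∀ y, g y ≤ h y) (x : X) :
    Sop M τ g x ≤ Sop M τ h x := by
  simp only [Sop]
  exact lintegral_mono fun ω => hgh _

lemma kac_bounded [MeasurableSingletonClass X] (M : MarkovChain X)
    (hst : IsPathStoppingTime τ) (hθ : ThetaCompatible M τ)
    (μ : Measure X) [IsFiniteMeasure μ] (hinv : PInvariant M μ)
    (htail : ∀ᵐ x ∂μ, Tendsto (fun n : ℕ => M.law x {ω | (n : ℕ∞) ≤ τ ω}) atTop (𝓝 0))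
    (hf : Measurable f) {C : ℝ≥0∞} (hC : C ≠ ⊤) (hfC : ∀ y, f y ≤ C) :
    ∫⁻ x, f x ∂μ = ∫⁻ x, Sop M τ (Rop M τ f) x ∂μ := by
  set F : ℝ≥0∞ := ∫⁻ x, f x ∂μ with hF
  set a : ℕ → ℝ≥0∞ := fun N => ∫⁻ x, kacGN M τ f N x ∂μ with ha
  set sq : ℕ → ℝ≥0∞ := fun N => ∫⁻ x, Sop M τ (kacGN M τ f N) x ∂μ with hsq
  set t : ℕ → ℝ≥0∞ := fun N => ∫⁻ x, (∫⁻ ω in {ω | 2 ≤ τ ω}, kacGN M τ f N (ω 1) ∂M.law x) ∂μ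
    with ht
  set d : ℕ → ℝ≥0∞ := fun N => ∫⁻ x,
    (∫⁻ ω, {ω' | (N:ℕ∞) < τ ω' ∧ τ ω' ≠ ⊤}.indicator (fun ω' => f (ω' N)) ω ∂M.law x) ∂μ
    with hd
  set e : ℕ → ℝ≥0∞ := fun n => ∫⁻ x, M.law x {ω | (n : ℕ∞) ≤ τ ω} ∂μ with he
  -- μ-a.e., ℙ_x(τ ≠ ⊤) = 1
  have hmeas_top : MeasurableSet {ω : ℕ → X | τ ω = ⊤} := by
    have h1 : {ω : ℕ → X | τ ω = ⊤} = {ω | τ ω ≠ ⊤}ᶜ := by ext ω; simp [mem_setOf_eq]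
    rw [h1]; exact (measSet_ne_top hst).compl
  have hμtop : ∀ᵐ x ∂μ, M.law x {ω | τ ω ≠ ⊤} = 1 := by
    filter_upwards [htail] with x hx
    have := M.prob x
    have hsub : ∀ n : ℕ, M.law x {ω | τ ω = ⊤} ≤ M.law x {ω | (n:ℕ∞) ≤ τ ω} := fun n =>
      measure_mono fun ω hω => by rw [mem_setOf_eq] at hω ⊢; rw [hω]; exact le_top
    have h0 : M.law x {ω | τ ω = ⊤} = 0 :=
      le_antisymm (ge_of_tendsto' hx hsub) (zero_le)
    have hco : {ω : ℕ → X | τ ω ≠ ⊤} = {ω | τ ω = ⊤}ᶜ := by ext ω; simp [mem_setOf_eq]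
    rw [hco, measure_compl hmeas_top (measure_ne_top _ _), h0, tsub_zero, measure_univ]
  -- the basic bounds
  have hbdd : ∀ N x, kacGN M τ f N x ≤ N * C := fun N x => kacGN_le M τ N x hfC
  have haN : ∀ N, a N ≠ ⊤ := by
    intro N
    have : a N ≤ (N * C) * μ Set.univ := by
      rw [ha]
      calc ∫⁻ x, kacGN M τ f N x ∂μ ≤ ∫⁻ _, (N : ℝ≥0∞) * C ∂μ := lintegral_mono fun x => hbdd N x
        _ = (N * C) * μ Set.univ := lintegral_const _
    exact ne_top_of_le_ne_top
      (ENNReal.mul_ne_top (ENNReal.mul_ne_top (ENNReal.natCast_ne_top N) hC) (measure_ne_top μ _))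
      this
  -- key recursion, integrated
  have key1 : ∀ N, a (N + 1) = F + t N := by
    intro N
    have e1 : a (N + 1) = ∫⁻ x, (f x * M.law x {ω | τ ω ≠ ⊤}
        + ∫⁻ ω in {ω | 2 ≤ τ ω}, kacGN M τ f N (ω 1) ∂M.law x) ∂μ :=
      lintegral_congr fun x => kacGN_succ_rec M hst hθ hf N x
    have hm : Measurable fun x => f x * M.law x {ω | τ ω ≠ ⊤} :=
      hf.mul ((Measure.measurable_coe (measSet_ne_top hst)).comp M.meas_law)
    rw [e1, lintegral_add_left hm]
    congr 1
    calc ∫⁻ x, f x * M.law x {ω | τ ω ≠ ⊤} ∂μ = ∫⁻ x, f x ∂μ := by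
          refine lintegral_congr_ae ?_
          filter_upwards [hμtop] with x hx
          rw [hx, mul_one]
      _ = F := rfl
  -- invariance: a N = sq N + t N
  have key2 : ∀ N, a N = sq N + t N := by
    intro N
    have hb : ∃ Cb : ℝ≥0∞, Cb ≠ ⊤ ∧ ∀ x, kacGN M τ f N x ≤ Cb :=
      ⟨N * C, ENNReal.mul_ne_top (ENNReal.natCast_ne_top N) hC, hbdd N⟩
    have hinvN := hinv (kacGN M τ f N) (meas_kacGN M hst hf N) hb
    have hsplit : ∀ x, Pop M (kacGN M τ f N) x = Sop M τ (kacGN M τ f N) x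
        + ∫⁻ ω in {ω | 2 ≤ τ ω}, kacGN M τ f N (ω 1) ∂M.law x :=
      fun x => Pop_split M hst (hθ.1 x) _
    calc a N = ∫⁻ x, Pop M (kacGN M τ f N) x ∂μ := hinvN.symm
      _ = ∫⁻ x, (Sop M τ (kacGN M τ f N) x
            + ∫⁻ ω in {ω | 2 ≤ τ ω}, kacGN M τ f N (ω 1) ∂M.law x) ∂μ :=
          lintegral_congr hsplit
      _ = sq N + t N :=
          lintegral_add_left (meas_Sop M hst (meas_kacGN M hst hf N)) _
  -- difference: a (N+1) = a N + d N
  have key3 : ∀ N, a (N + 1) = a N + d N := by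
    intro N
    show (∫⁻ x, kacGN M τ f (N+1) x ∂μ)
      = (∫⁻ x, kacGN M τ f N x ∂μ)
        + ∫⁻ x, (∫⁻ ω, {ω' | (N:ℕ∞) < τ ω' ∧ τ ω' ≠ ⊤}.indicator
            (fun ω' => f (ω' N)) ω ∂M.law x) ∂μ
    rw [lintegral_congr (μ := μ) fun x => kacGN_succ_diff M hst hf N x,
      lintegral_add_left (meas_kacGN M hst hf N)]
  -- cancel t N : sq N + d N = F
  have htN : ∀ N, t N ≠ ⊤ := fun N =>
    ne_top_of_le_ne_top (haN N) (by rw [key2 N]; exact le_add_self)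
  have key4 : ∀ N, sq N + d N = F := by
    intro N
    have h1 : sq N + t N + d N = F + t N := by rw [← key2 N, ← key3 N, key1 N]
    have h2 : t N + (sq N + d N) = t N + F := by
      calc t N + (sq N + d N) = sq N + t N + d N := by ring
        _ = F + t N := h1
        _ = t N + F := by ring
    exact (ENNReal.add_right_inj (htN N)).1 h2
  -- d N → 0
  have hdle : ∀ N, d N ≤ C * e (N + 1) := by
    intro N
    calc d N ≤ ∫⁻ x, C * M.law x {ω | ((N+1:ℕ):ℕ∞) ≤ τ ω} ∂μ :=
          lintegral_mono fun x => kacGN_diff_le M hst hfC N x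
      _ = C * e (N + 1) := lintegral_const_mul' _ _ hC
  have he0 : Tendsto e atTop (𝓝 0) := by
    have := tendsto_lintegral_of_dominated_convergence (μ := μ)
      (F := fun n x => M.law x {ω | (n : ℕ∞) ≤ τ ω}) (f := fun _ => 0) (fun _ => 1)
      (fun n => (Measure.measurable_coe (measSet_le hst n)).comp M.meas_law)
      (fun n => ae_of_all _ fun x => by have := M.prob x; exact prob_le_one)
      (by rw [lintegral_one]; exact measure_ne_top μ _)
      htail
    rw [lintegral_zero] at this
    exact this
  have hd0 : Tendsto d atTop (𝓝 0) := by
    have h1 : Tendsto (fun N => C * e (N + 1)) atTop (𝓝 0) := by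
      have h2 : Tendsto (fun N : ℕ => e (N + 1)) atTop (𝓝 0) :=
        he0.comp (tendsto_add_atTop_nat 1)
      have := ENNReal.Tendsto.const_mul (a := C) h2 (Or.inr hC)
      simpa using this
    exact tendsto_of_tendsto_of_tendsto_of_le_of_le tendsto_const_nhds h1
      (fun N => zero_le) hdle
  -- sq is monotone and converges to ∫ Sop (Rop f) dμ
  have hsq_mono : Monotone sq := by
    intro N N' hNN
    refine lintegral_mono fun x => Sop_mono M (fun y => ?_) x
    exact kacGN_mono_N M τ f hNN y
  have hSR : ∀ x, Sop M τ (Rop M τ f) x = ⨆ N, Sop M τ (kacGN M τ f N) x := by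
    intro x
    simp only [Sop]
    have h1 : ∀ ω : ℕ → X, Rop M τ f (ω 1) = ⨆ N, kacGN M τ f N (ω 1) := fun ω =>
      Rop_eq_iSup M hst hf (ω 1)
    have hmN : ∀ N, Measurable fun ω : ℕ → X => kacGN M τ f N (ω 1) := fun N =>
      (meas_kacGN M hst hf N).comp (measurable_pi_apply 1)
    have hmono : Monotone fun N => fun ω : ℕ → X => kacGN M τ f N (ω 1) := fun N N' hNN ω =>
      kacGN_mono_N M τ f hNN (ω 1)
    rw [lintegral_congr h1, lintegral_iSup hmN hmono]
  have hlim : ∫⁻ x, Sop M τ (Rop M τ f) x ∂μ = ⨆ N, sq N := by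
    rw [lintegral_congr hSR,
      lintegral_iSup (fun N => meas_Sop M hst (meas_kacGN M hst hf N))
        (fun N N' hNN x => Sop_mono M (fun y => kacGN_mono_N M τ f hNN y) x)]
  -- conclude
  have hts : Tendsto sq atTop (𝓝 (⨆ N, sq N)) := tendsto_atTop_iSup hsq_mono
  have h1 : Tendsto (fun N => sq N + d N) atTop (𝓝 ((⨆ N, sq N) + 0)) := hts.add hd0
  have h2 : (fun N => sq N + d N) = fun _ => F := funext key4
  rw [h2] at h1
  have h3 : (⨆ N, sq N) + 0 = F := tendsto_nhds_unique (tendsto_const_nhds) h1 |>.symm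
  rw [add_zero] at h3
  rw [hlim, h3]

end KacMain

end KacAux

/-- Lemma 1.6 (generalized Kac lemma): if `μ` is a finite `P`-invariant measure and `τ` a
θ-compatible stopping time with `ℙ_x(τ ≥ n) → 0` for `μ`-a.e. `x`, then
`∫ f dμ = ∫ SRf dμ` for every nonnegative borelian `f`. -/
theorem stmt1 [MetricSpace X] [CompleteSpace X] [TopologicalSpace.SeparableSpace X] [BorelSpace X]
    (M : MarkovChain X) (τ : (ℕ → X) → ℕ∞)
    (hst : IsPathStoppingTime τ) (hθ : ThetaCompatible M τ)
    (μ : Measure X) [IsFiniteMeasure μ] (hinv : PInvariant M μ)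
    (htail : ∀ᵐ x ∂μ, Tendsto (fun n : ℕ => M.law x {ω | (n : ℕ∞) ≤ τ ω}) atTop (𝓝 0))
    (f : X → ℝ≥0∞) (hf : Measurable f) :
    ∫⁻ x, f x ∂μ = ∫⁻ x, Sop M τ (Rop M τ f) x ∂μ := by
  set fn : ℕ → X → ℝ≥0∞ := fun n x => min (f x) n with hfn
  have hfn_meas : ∀ n, Measurable (fn n) := fun n => hf.min measurable_const
  have hfn_le : ∀ n y, fn n y ≤ (n : ℝ≥0∞) := fun n y => min_le_right _ _
  have hfn_mono : ∀ y, Monotone fun n => fn n y := fun y n n' h =>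
    min_le_min le_rfl (Nat.cast_le.2 h)
  have hfn_sup : ∀ y, (⨆ n, fn n y) = f y := by
    intro y
    calc ⨆ n : ℕ, min (f y) (n : ℝ≥0∞) = f y ⊓ ⨆ n : ℕ, (n : ℝ≥0∞) :=
          (inf_iSup_eq _ _).symm
      _ = f y := by rw [ENNReal.iSup_natCast, inf_top_eq]
  have hbnd : ∀ n, ∫⁻ x, fn n x ∂μ = ∫⁻ x, Sop M τ (Rop M τ (fn n)) x ∂μ := fun n =>
    kac_bounded M hst hθ μ hinv htail (hfn_meas n) (ENNReal.natCast_ne_top n) (hfn_le n)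
  have hkacG : ∀ (N : ℕ) (ω : ℕ → X), kacG τ f N ω = ⨆ n, kacG τ (fn n) N ω := by
    intro N ω
    have hterm : ∀ k : ℕ, {ω' | (k:ℕ∞) < τ ω' ∧ τ ω' ≠ ⊤}.indicator (fun ω' => f (ω' k)) ω
        = ⨆ n, {ω' | (k:ℕ∞) < τ ω' ∧ τ ω' ≠ ⊤}.indicator (fun ω' => fn n (ω' k)) ω := by
      intro k
      by_cases hmem : ω ∈ {ω' | (k:ℕ∞) < τ ω' ∧ τ ω' ≠ ⊤}
      · rw [Set.indicator_of_mem hmem]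
        simp only [Set.indicator_of_mem hmem]
        exact (hfn_sup _).symm
      · rw [Set.indicator_of_notMem hmem]
        simp only [Set.indicator_of_notMem hmem, iSup_const]
    rw [kacG, Finset.sum_congr rfl fun k _ => hterm k]
    exact ENNReal.finsetSum_iSup_of_monotone (s := Finset.range N)
      (f := fun k n => {ω' | (k:ℕ∞) < τ ω' ∧ τ ω' ≠ ⊤}.indicator (fun ω' => fn n (ω' k)) ω)
      (fun k n n' h => Set.indicator_le_indicator (hfn_mono _ h))
  have hkacGN : ∀ (N : ℕ) (x : X), kacGN M τ f N x = ⨆ n, kacGN M τ (fn n) N x := by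
    intro N x
    rw [kacGN, lintegral_congr (fun ω => hkacG N ω), lintegral_iSup
      (fun n => meas_kacG hst (hfn_meas n) N)
      (fun n n' h ω => kacG_mono_f (fun y => hfn_mono y h) N ω)]
    rfl
  have hRop : ∀ x, Rop M τ f x = ⨆ n, Rop M τ (fn n) x := by
    intro x
    rw [Rop_eq_iSup M hst hf]
    calc ⨆ N, kacGN M τ f N x = ⨆ N, ⨆ n, kacGN M τ (fn n) N x :=
          iSup_congr fun N => hkacGN N x
      _ = ⨆ n, ⨆ N, kacGN M τ (fn n) N x := iSup_comm
      _ = ⨆ n, Rop M τ (fn n) x := iSup_congr fun n => (Rop_eq_iSup M hst (hfn_meas n) x).symm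
  have hRmeas : ∀ n, Measurable (Rop M τ (fn n)) := by
    intro n
    have h1 : Rop M τ (fn n) = fun x => ⨆ N, kacGN M τ (fn n) N x :=
      funext fun x => Rop_eq_iSup M hst (hfn_meas n) x
    rw [h1]
    exact Measurable.iSup fun N => meas_kacGN M hst (hfn_meas n) N
  have hRmono : ∀ n n', n ≤ n' → ∀ y, Rop M τ (fn n) y ≤ Rop M τ (fn n') y := by
    intro n n' h y
    rw [Rop_eq_iSup M hst (hfn_meas n), Rop_eq_iSup M hst (hfn_meas n')]
    exact iSup_mono fun N => kacGN_mono_f M (fun z => hfn_mono z h) N y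
  have hSop : ∀ x, Sop M τ (Rop M τ f) x = ⨆ n, Sop M τ (Rop M τ (fn n)) x := by
    intro x
    simp only [Sop]
    have h1 : ∀ ω : ℕ → X, Rop M τ f (ω 1) = ⨆ n, Rop M τ (fn n) (ω 1) := fun ω => hRop (ω 1)
    have hmN : ∀ n, Measurable fun ω : ℕ → X => Rop M τ (fn n) (ω 1) := fun n =>
      (hRmeas n).comp (measurable_pi_apply 1)
    have hmono : Monotone fun n => fun ω : ℕ → X => Rop M τ (fn n) (ω 1) := fun n n' h ω =>
      hRmono n n' h (ω 1)
    rw [lintegral_congr h1, lintegral_iSup hmN hmono]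
  calc ∫⁻ x, f x ∂μ = ∫⁻ x, ⨆ n, fn n x ∂μ := lintegral_congr fun x => (hfn_sup x).symm
    _ = ⨆ n, ∫⁻ x, fn n x ∂μ := lintegral_iSup hfn_meas (fun n n' h x => hfn_mono x h)
    _ = ⨆ n, ∫⁻ x, Sop M τ (Rop M τ (fn n)) x ∂μ := iSup_congr hbnd
    _ = ∫⁻ x, ⨆ n, Sop M τ (Rop M τ (fn n)) x ∂μ := by
        rw [lintegral_iSup (fun n => meas_Sop M hst (hRmeas n))
          (fun n n' h x => Sop_mono M (fun y => hRmono n n' h y) x)]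
    _ = ∫⁻ x, Sop M τ (Rop M τ f) x ∂μ := lintegral_congr fun x => (hSop x).symm


end
end
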